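/- Every CAT(0) cube complex with finite width and finitely colorable hyperplanes is regularly collapsible. -/

import Mathlib

/-- The metric interval between two vertices of a graph (with the path metric). -/
def gInterval {V : Type} (G : SimpleGraph V) (x y : V) : Set V :=
  {w | G.dist x w + G.dist w y = G.dist x y}

/-- A vertex set is convex if it contains all metric intervals between its points. -/
def GConvex {V : Type} (G : SimpleGraph V) (H : Set V) : Prop :=
  ∀ x ∈ H, ∀ y ∈ H, gInterval G x y ⊆ H

/-- A graph is median if it is connected and every triple of vertices has a unique
median, i.e. a unique vertex lying in all three pairwise metric intervals. -/
def IsMedianGraph {V : Type} (G : SimpleGraph V) : Prop :=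
  G.Connected ∧ ∀ x y z : V,
    ∃! w, w ∈ gInterval G x y ∧ w ∈ gInterval G y z ∧ w ∈ gInterval G x z

/-- A vertex set is a halfspace if it and its complement are nonempty and convex. -/
def IsHalfspace {V : Type} (G : SimpleGraph V) (H : Set V) : Prop :=
  H.Nonempty ∧ Hᶜ.Nonempty ∧ GConvex G H ∧ GConvex G Hᶜ

/-- The 1-skeleton of `𝒞 ∪ ⋃ᵢ (ℒᵢ × [0,1])`: for each `j` a new copy of the
subcomplex `L j` is added, with each new vertex joined to its base vertex. -/
def glueGraph {V : Type} (G : SimpleGraph V) {J : Type} (L : J → Set V) :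
    SimpleGraph (V ⊕ Σ j : J, ↥(L j)) :=
  SimpleGraph.fromRel (fun a b =>
    match a, b with
    | .inl a, .inl b => G.Adj a b
    | .inl a, .inr b => a = ↑b.2
    | .inr _, .inl _ => False
    | .inr a, .inr b => a.1 = b.1 ∧ G.Adj ↑a.2 ↑b.2)

/-- Two halfspaces cross. -/
def Crossing {V : Type} (H K : Set V) : Prop :=
  (H ∩ K).Nonempty ∧ (H ∩ Kᶜ).Nonempty ∧ (Hᶜ ∩ K).Nonempty ∧ (Hᶜ ∩ Kᶜ).Nonempty

/-- Regular collapsibility in `m` steps: starting from a single point, each step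
glues a family of products of cuboids (nonempty convex connected subcomplexes)
with an interval. -/
inductive RegCollapsible : ∀ {V : Type}, SimpleGraph V → ℕ → Prop
  | point {V : Type} (G : SimpleGraph V) (v : V) (hv : ∀ w, w = v) : RegCollapsible G 0
  | glue {V : Type} {G : SimpleGraph V} {m : ℕ} (hG : RegCollapsible G m)
      {J : Type} (L : J → Set V)
      (hL : ∀ j, (L j).Nonempty ∧ (G.induce (L j)).Connected ∧ GConvex G (L j))
      {V' : Type} (G' : SimpleGraph V') (e : G' ≃g glueGraph G L) :
      RegCollapsible G' (m + 1)

namespace MC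
variable {V : Type} {G : SimpleGraph V}

lemma mem_gInt {x y w : V} : w ∈ gInterval G x y ↔ G.dist x w + G.dist w y = G.dist x y :=
  Iff.rfl

lemma gInt_left (x y : V) : x ∈ gInterval G x y := by simp [mem_gInt]

lemma gInt_right (x y : V) : y ∈ gInterval G x y := by simp [mem_gInt]

lemma dcomm (G : SimpleGraph V) (x y : V) : G.dist x y = G.dist y x :=
  SimpleGraph.dist_comm

lemma gInt_symm {x y w : V} (h : w ∈ gInterval G x y) : w ∈ gInterval G y x := by
  simp only [mem_gInt] at *
  have c1 := dcomm G y w; have c2 := dcomm G w x; have c3 := dcomm G y x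
  omega

lemma dist0 (hc : G.Connected) {x y : V} : G.dist x y = 0 ↔ x = y :=
  hc.dist_eq_zero_iff

lemma dist1 {x y : V} : G.dist x y = 1 ↔ G.Adj x y := SimpleGraph.dist_eq_one_iff_adj

/-- interval of an edge is the pair -/
lemma gInt_adj (hc : G.Connected) {a b : V} (hab : G.Adj a b) :
    gInterval G a b = {a, b} := by
  ext w
  simp only [mem_gInt, Set.mem_insert_iff, Set.mem_singleton_iff]
  constructor
  · intro h
    rw [dist1.2 hab] at h
    rcases Nat.add_eq_one_iff.1 h with ⟨h1, _⟩ | ⟨_, h2⟩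
    · left; exact ((dist0 hc).1 h1).symm
    · right; exact (dist0 hc).1 h2
  · rintro (rfl | rfl) <;> simp [dist1.2 hab, G.dist_comm]

/-- triangle ineq helper -/
lemma tri (hc : G.Connected) (x y z : V) : G.dist x z ≤ G.dist x y + G.dist y z :=
  hc.dist_triangle

lemma gInt_trans (hc : G.Connected) {u v w x : V} (hw : w ∈ gInterval G u v)
    (hx : x ∈ gInterval G u w) : x ∈ gInterval G u v := by
  simp only [mem_gInt] at *
  have t1 := tri hc x w v
  have t2 := tri hc u x v
  omega

/-- w ∈ I(u,v), x ∈ I(u,w) ⇒ w ∈ I(x,v) -/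
lemma gInt_trans' (hc : G.Connected) {u v w x : V} (hw : w ∈ gInterval G u v)
    (hx : x ∈ gInterval G u w) : w ∈ gInterval G x v := by
  simp only [mem_gInt] at *
  have t1 := tri hc u x v
  have t2 := tri hc x w v
  have t3 := tri hc u w x
  have c1 := dcomm G u x; have c2 := dcomm G w x
  omega

/-- I(w,v) ⊆ I(u,v) when w ∈ I(u,v) -/
lemma gInt_trans'' (hc : G.Connected) {u v w x : V} (hw : w ∈ gInterval G u v)
    (hx : x ∈ gInterval G w v) : x ∈ gInterval G u v := by
  have h1 : w ∈ gInterval G v u := gInt_symm hw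
  have h2 : x ∈ gInterval G v w := gInt_symm hx
  exact gInt_symm (gInt_trans hc h1 h2)

noncomputable def med (hG : IsMedianGraph G) (x y z : V) : V :=
  (hG.2 x y z).exists.choose

lemma med_spec (hG : IsMedianGraph G) (x y z : V) :
    med hG x y z ∈ gInterval G x y ∧ med hG x y z ∈ gInterval G y z ∧
      med hG x y z ∈ gInterval G x z :=
  (hG.2 x y z).exists.choose_spec

lemma med_unique (hG : IsMedianGraph G) {x y z w : V}
    (h1 : w ∈ gInterval G x y) (h2 : w ∈ gInterval G y z) (h3 : w ∈ gInterval G x z) :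
    w = med hG x y z := by
  rcases hG.2 x y z with ⟨m, hm, hu⟩
  rw [hu w ⟨h1, h2, h3⟩]
  exact (hu _ (med_spec hG x y z)).symm

/-- parity: across an edge, distances to any vertex differ by exactly one -/
lemma parity (hG : IsMedianGraph G) {a b : V} (hab : G.Adj a b) (w : V) :
    G.dist w b = G.dist w a + 1 ∨ G.dist w a = G.dist w b + 1 := by
  have hc := hG.1
  have hm := med_spec hG w a b
  have : med hG w a b ∈ ({a, b} : Set V) := by
    rw [← gInt_adj hc hab]; exact hm.2.1
  have hab1 : G.dist a b = 1 := dist1.2 hab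
  rcases this with h | h
  · left
    have hb := hm.2.2
    rw [h] at hb
    simp only [mem_gInt] at hb
    omega
  · simp only [Set.mem_singleton_iff] at h
    right
    have hb := hm.1
    rw [h] at hb
    simp only [mem_gInt] at hb
    have c1 := dcomm G b a
    omega

lemma parity_ne (hG : IsMedianGraph G) {a b : V} (hab : G.Adj a b) (w : V) :
    G.dist w a ≠ G.dist w b := by
  rcases parity hG hab w with h | h <;> omega

/-- neighbor along a geodesic -/
lemma exists_nbr (hc : G.Connected) {u v : V} {k : ℕ} (h : G.dist u v = k + 1) :
    ∃ z, G.Adj u z ∧ G.dist z v = k ∧ z ∈ gInterval G u v := by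
  obtain ⟨p, hp⟩ := hc.exists_walk_length_eq_dist u v
  cases p with
  | nil => simp at hp; simp at h
  | cons hadj q =>
    rename_i z
    refine ⟨z, hadj, ?_, ?_⟩
    · have h1 : G.dist z v ≤ q.length := SimpleGraph.dist_le q
      have h2 : G.dist u v ≤ 1 + G.dist z v := by
        have := tri hc u z v
        rw [dist1.2 hadj] at this; omega
      simp only [SimpleGraph.Walk.length_cons] at hp
      omega
    · have h1 : G.dist z v ≤ q.length := SimpleGraph.dist_le q
      simp only [SimpleGraph.Walk.length_cons] at hp
      have h2 : G.dist u z ≤ 1 := by rw [← dist1.2 hadj]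
      have := tri hc u z v
      simp only [mem_gInt]
      omega



def Wh (G : SimpleGraph V) (a b : V) : Set V := {w | G.dist w a < G.dist w b}

lemma Wh_iff (hG : IsMedianGraph G) {a b : V} (hab : G.Adj a b) {w : V} :
    w ∈ Wh G a b ↔ G.dist w b = G.dist w a + 1 := by
  have := parity hG hab w
  constructor
  · intro h; simp only [Wh, Set.mem_setOf_eq] at h; omega
  · intro h; simp only [Wh, Set.mem_setOf_eq]; omega

lemma Wh_not_iff (hG : IsMedianGraph G) {a b : V} (hab : G.Adj a b) {w : V} :
    w ∉ Wh G a b ↔ G.dist w a = G.dist w b + 1 := by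
  have := parity hG hab w
  simp only [Wh, Set.mem_setOf_eq]
  omega

lemma Wh_compl (hG : IsMedianGraph G) {a b : V} (hab : G.Adj a b) :
    (Wh G a b)ᶜ = Wh G b a := by
  ext w
  have := parity hG hab w
  simp only [Set.mem_compl_iff, Wh, Set.mem_setOf_eq]
  omega

/-- across an edge with opposite orientations, distances align -/
lemma edge_flip (hG : IsMedianGraph G) {a b u z : V} (hab : G.Adj a b) (huz : G.Adj u z)
    (hu : G.dist u b = G.dist u a + 1) (hz : G.dist z a = G.dist z b + 1) :
    G.dist u a = G.dist z b ∧ G.dist u b = G.dist z b + 1 := by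
  have p1 := parity hG huz a
  have p2 := parity hG huz b
  have c1 := dcomm G a u; have c2 := dcomm G a z
  have c3 := dcomm G b u; have c4 := dcomm G b z
  omega

/-- Claim A: 2-point convexity of halfspaces -/
lemma claimA (hG : IsMedianGraph G) {a b : V} (hab : G.Adj a b) :
    ∀ N : ℕ, ∀ u v z : V, G.dist u b + G.dist v b ≤ N → G.Adj u z → G.Adj z v →
    G.dist u v = 2 → G.dist u b = G.dist u a + 1 → G.dist v b = G.dist v a + 1 →
    G.dist z a = G.dist z b + 1 → False := by
  have hc := hG.1
  intro N
  induction N using Nat.strong_induction_on with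
  | _ N IH =>
    intro u v z hN huz hzv huv hu hv hz
    set t := G.dist z b with ht
    obtain ⟨hua, hub⟩ := edge_flip hG hab huz hu hz
    obtain ⟨hva, hvb⟩ := edge_flip hG hab hzv.symm hv hz
    -- t = 0 impossible
    rcases Nat.eq_zero_or_pos t with ht0 | htpos
    · have hu0 : u = a := (dist0 hc).1 (by omega)
      have hv0 : v = a := (dist0 hc).1 (by omega)
      rw [hu0, hv0, SimpleGraph.dist_self] at huv
      exact absurd huv (by omega)
    -- the median P of (u, v, a)
    set P := med hG u v a with hPdef
    obtain ⟨hP1, hP2, hP3⟩ := med_spec hG u v a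
    rw [← hPdef] at hP1 hP2 hP3
    simp only [mem_gInt] at hP1 hP2 hP3
    have cPa := dcomm G P a; have cPv := dcomm G P v
    have hPu : G.dist u P = 1 ∧ G.dist v P = 1 ∧ G.dist P a = G.dist u a - 1 := by
      have h1 : G.dist u P ≠ 0 := by
        intro h0
        have he : u = P := (dist0 hc).1 h0
        rw [← he] at hP2
        have cvu := dcomm G v u
        omega
      have h2 : G.dist v P ≠ 0 := by
        intro h0
        have he : v = P := (dist0 hc).1 h0
        rw [← he] at hP3
        omega
      have cvP := dcomm G v P
      omega
    obtain ⟨huP, hvP, hPa⟩ := hPu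
    have hPa' : G.dist P a = t - 1 := by omega
    have hadjuP : G.Adj u P := dist1.1 huP
    have hPb : G.dist P b = t := by
      have p1 := parity hG hadjuP b
      have p2 := parity hG hab P
      have c3 := dcomm G b u; have c4 := dcomm G b P
      omega
    have hzP : G.dist z P = 2 := by
      have hne : G.dist z P ≠ 1 := by
        intro h1
        have := parity hG (dist1.1 h1) a
        have c1 := dcomm G a z; have c2 := dcomm G a P
        omega
      have hne0 : G.dist z P ≠ 0 := by
        intro h0
        have he : z = P := (dist0 hc).1 h0
        rw [← he] at hPa'
        omega
      have tr := tri hc z u P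
      have czu := dcomm G z u
      have h1 : G.dist u z = 1 := dist1.2 huz
      omega
    -- the median R of (z, P, b)
    set R := med hG z P b with hRdef
    obtain ⟨hR1, hR2, hR3⟩ := med_spec hG z P b
    rw [← hRdef] at hR1 hR2 hR3
    simp only [mem_gInt] at hR1 hR2 hR3
    have cRP := dcomm G R P; have cRb := dcomm G R b
    have hzR : G.dist z R = 1 ∧ G.dist P R = 1 ∧ G.dist R b = t - 1 := by
      have cPR := dcomm G P R
      omega
    obtain ⟨hzR1, hPR1, hRb⟩ := hzR
    have hadjzR : G.Adj z R := dist1.1 hzR1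
    have hadjPR : G.Adj P R := dist1.1 (by omega : G.dist P R = 1)
    have hRa := parity hG hab R
    rcases hRa with hgood | hbad
    · -- f(R) = -1 (good): recurse on (u, R, z) with smaller measure
      have hRa' : G.dist R a = t - 2 ∧ 2 ≤ t := by
        constructor
        · omega
        · -- if t = 1 then R = b, good means dist R b = dist R a + 1 i.e. 0 = ...
          by_contra hlt
          have ht1 : t = 1 := by omega
          have he : R = b := (dist0 hc).1 (by omega)
          rw [he, SimpleGraph.dist_self] at hgood
          have cba := dcomm G b a
          have h1 : G.dist a b = 1 := dist1.2 hab
          omega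
      have huR : G.dist u R = 2 := by
        have hne0 : G.dist u R ≠ 0 := by
          intro h0
          have he : u = R := (dist0 hc).1 h0
          rw [← he] at hRb; omega
        have hne1 : G.dist u R ≠ 1 := by
          intro h1
          have := parity hG (dist1.1 h1) b
          have c1 := dcomm G b u; have c2 := dcomm G b R
          omega
        have tr := tri hc u z R
        have h1 : G.dist u z = 1 := dist1.2 huz
        omega
      exact IH (G.dist u b + G.dist R b) (by omega) u R z (le_refl _) huz hadjzR
        huR hu (by omega) hz
    · -- f(R) = +1 (bad): z and P are both medians of (u, v, R): contradiction
      have hRa2 : G.dist R a = t := by omega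
      have huR : G.dist u R = 2 := by
        have hne0 : G.dist u R ≠ 0 := by
          intro h0
          have he : u = R := (dist0 hc).1 h0
          rw [← he] at hRb; omega
        have hne1 : G.dist u R ≠ 1 := by
          intro h1
          have := parity hG (dist1.1 h1) a
          have c1 := dcomm G a u; have c2 := dcomm G a R
          omega
        have tr := tri hc u z R
        have h1 : G.dist u z = 1 := dist1.2 huz
        omega
      have hvR : G.dist v R = 2 := by
        have hne0 : G.dist v R ≠ 0 := by
          intro h0
          have he : v = R := (dist0 hc).1 h0
          rw [← he] at hRb; omega
        have hne1 : G.dist v R ≠ 1 := by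
          intro h1
          have := parity hG (dist1.1 h1) a
          have c1 := dcomm G a v; have c2 := dcomm G a R
          omega
        have tr := tri hc v z R
        have h2 : G.dist z v = 1 := dist1.2 hzv
        have cvz := dcomm G v z
        omega
      have hzmed : z = med hG u v R := by
        apply med_unique hG
        · simp only [mem_gInt]
          have cuz := dcomm G u z  -- d u z
          have czv := dcomm G z v
          have h1 : G.dist u z = 1 := dist1.2 huz
          have h2 : G.dist z v = 1 := dist1.2 hzv
          omega
        · simp only [mem_gInt]
          have h2 : G.dist z v = 1 := dist1.2 hzv
          have cvz := dcomm G v z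
          omega
        · simp only [mem_gInt]
          have h1 : G.dist u z = 1 := dist1.2 huz
          omega
      have hPmed : P = med hG u v R := by
        apply med_unique hG
        · simp only [mem_gInt]; omega
        · simp only [mem_gInt]
          have cvP2 := dcomm G v P
          omega
        · simp only [mem_gInt]; omega
      have : z = P := hzmed.trans hPmed.symm
      subst this
      omega

/-- Claim B: no bad vertex adjacent to a good endpoint inside an interval -/
lemma claimB (hG : IsMedianGraph G) {a b : V} (hab : G.Adj a b) :
    ∀ K : ℕ, ∀ u v z : V, G.dist z v = K → G.Adj u z → z ∈ gInterval G u v →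
    G.dist u b = G.dist u a + 1 → G.dist v b = G.dist v a + 1 →
    G.dist z a = G.dist z b + 1 → False := by
  have hc := hG.1
  intro K
  induction K using Nat.strong_induction_on with
  | _ K IH =>
    intro u v z hzv huz hzI hu hv hz
    set p := G.dist z b with hp
    obtain ⟨hua, hub⟩ := edge_flip hG hab huz hu hz
    simp only [mem_gInt] at hzI
    have huz1 : G.dist u z = 1 := dist1.2 huz
    -- K = 0 impossible
    rcases Nat.eq_zero_or_pos K with hK0 | hKpos
    · have he : z = v := (dist0 hc).1 (by omega)
      rw [he] at hz hp; omega
    have huv : G.dist u v = K + 1 := by omega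
    -- base case K = 1
    rcases Nat.lt_or_ge K 2 with hK1 | hK2
    · have hK1 : K = 1 := by omega
      have hzv1 : G.Adj z v := dist1.1 (by omega)
      exact claimA hG hab (G.dist u b + G.dist v b) u v z (le_refl _) huz hzv1
        (by omega) hu hv hz
    -- the median m of (z, v, b)
    set m := med hG z v b with hmdef
    obtain ⟨hm1, hm2, hm3⟩ := med_spec hG z v b
    rw [← hmdef] at hm1 hm2 hm3
    have hm1' := hm1; have hm2' := hm2; have hm3' := hm3
    simp only [mem_gInt] at hm1 hm2 hm3
    -- case m = v
    rcases Nat.eq_zero_or_pos (G.dist m v) with hmv0 | hmv1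
    · have he : m = v := (dist0 hc).1 hmv0
      rw [he] at hm3
      have t1 := tri hc z v a
      omega
    -- case m = z
    rcases Nat.eq_zero_or_pos (G.dist z m) with hzm0 | hzm1
    · have he : z = m := (dist0 hc).1 hzm0
      rw [← he] at hm2 hm2'
      have hvz := dcomm G v z
      -- the median ma of (z, v, a)
      set ma := med hG z v a with hmadef
      obtain ⟨ha1, ha2, ha3⟩ := med_spec hG z v a
      rw [← hmadef] at ha1 ha2 ha3
      have ha1' := ha1
      simp only [mem_gInt] at ha1 ha2 ha3
      have hsolve : G.dist z ma = 1 ∧ G.dist ma v = K - 1 ∧ G.dist ma a = p := by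
        have c1 := dcomm G ma v; have c2 := dcomm G v ma
        omega
      obtain ⟨hzma, hmav, hmaa⟩ := hsolve
      -- ma ∈ I(v,b) hence d ma b = p+1
      have hmaI : ma ∈ gInterval G v b := gInt_trans hc hm2' (gInt_symm ha1')
      simp only [mem_gInt] at hmaI
      have hmab : G.dist ma b = p + 1 := by
        have c1 := dcomm G ma v; have c2 := dcomm G v ma
        omega
      have huma : G.dist u ma = 2 := by
        have hne0 : G.dist u ma ≠ 0 := by
          intro h0
          have he2 : u = ma := (dist0 hc).1 h0
          rw [← he2] at ha1
          have c1 := dcomm G z u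
          omega
        have hne1 : G.dist u ma ≠ 1 := by
          intro h1
          have := parity hG (dist1.1 h1) a
          have c1 := dcomm G a u; have c2 := dcomm G a ma
          omega
        have tr := tri hc u z ma
        omega
      exact claimA hG hab (G.dist u b + G.dist ma b) u ma z (le_refl _) huz
        (dist1.1 hzma) huma hu (by omega) hz
    -- main split on f(m)
    rcases parity hG hab m with hgood | hbad
    · -- m good: z ∈ I(u,m), recurse
      have hum : G.dist u m = G.dist z m + 1 := by
        have t1 := tri hc u z m
        have t2 := tri hc u m v
        omega
      have hzI2 : z ∈ gInterval G u m := by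
        simp only [mem_gInt]; omega
      exact IH (G.dist z m) (by omega) u m z rfl huz hzI2 hu hgood hz
    · -- m bad: construct y and r, recurse from the v side
      obtain ⟨y, hzy, hym, hyI⟩ := exists_nbr hc (show G.dist z m = (G.dist z m - 1) + 1 by omega)
      have hyIb : y ∈ gInterval G z b := gInt_trans hc hm3' hyI
      have hyIv : y ∈ gInterval G z v := gInt_trans hc hm1' hyI
      simp only [mem_gInt] at hyI hyIb hyIv
      have hzy1 : G.dist z y = 1 := by omega
      have hyb : G.dist y b = p - 1 := by omega
      have hp1 : 1 ≤ p := by omega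
      have hyv : G.dist y v = K - 1 := by omega
      have hya : G.dist y a = p := by
        have p1 := parity hG (dist1.1 hzy1) a
        have p2 := parity hG hab y
        have c1 := dcomm G a z; have c2 := dcomm G a y
        omega
      -- the median r of (u, y, a)
      have huy : G.dist u y = 2 := by
        have hne0 : G.dist u y ≠ 0 := by
          intro h0
          have he2 : u = y := (dist0 hc).1 h0
          rw [← he2] at hyb; omega
        have hne1 : G.dist u y ≠ 1 := by
          intro h1
          have := parity hG (dist1.1 h1) a
          have c1 := dcomm G a u; have c2 := dcomm G a y
          omega
        have tr := tri hc u z y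
        omega
      set r := med hG u y a with hrdef
      obtain ⟨hr1, hr2, hr3⟩ := med_spec hG u y a
      rw [← hrdef] at hr1 hr2 hr3
      have hr1' := hr1
      simp only [mem_gInt] at hr1 hr2 hr3
      have hsolve : G.dist u r = 1 ∧ G.dist r y = 1 ∧ G.dist r a = p - 1 := by
        have c1 := dcomm G r y; have c2 := dcomm G y r
        omega
      obtain ⟨hur, hry, hra⟩ := hsolve
      have hrb : G.dist r b = p := by
        have p1 := parity hG (dist1.1 hur) b
        have p2 := parity hG hab r
        have c1 := dcomm G b u; have c2 := dcomm G b r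
        omega
      have hyIuv : y ∈ gInterval G u v := by
        simp only [mem_gInt]; omega
      have hrIuv : r ∈ gInterval G u v := gInt_trans hc hyIuv hr1'
      simp only [mem_gInt] at hrIuv
      have hyIrv : y ∈ gInterval G r v := by
        simp only [mem_gInt]; omega
      exact IH (K - 1) (by omega) r v y (by omega) (dist1.1 hry) hyIrv
        (by omega) hv (by omega)

lemma Wh_convex (hG : IsMedianGraph G) {a b : V} (hab : G.Adj a b) :
    GConvex G (Wh G a b) := by
  have hc := hG.1
  intro u hu v hv x hx
  rw [Wh_iff hG hab] at hu hv
  by_contra hxW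
  rw [Wh_not_iff hG hab] at hxW
  -- auxiliary strict induction on d u x
  have aux : ∀ M : ℕ, ∀ x' : V, G.dist u x' = M → x' ∈ gInterval G u v →
      G.dist x' a = G.dist x' b + 1 → False := by
    intro M
    induction M using Nat.strong_induction_on with
    | _ M IH2 =>
      intro x' hM hxI hxbad
      rcases Nat.eq_zero_or_pos M with hM0 | hMpos
      · have he : u = x' := (dist0 hc).1 (by omega)
        rw [← he] at hxbad; omega
      obtain ⟨z', hxz', hz'u, hz'I⟩ := exists_nbr hc
        (show G.dist x' u = (M - 1) + 1 by have := dcomm G u x'; omega)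
      have hz'Iuv : z' ∈ gInterval G u v := gInt_trans hc hxI (gInt_symm hz'I)
      rcases parity hG hab z' with hgood | hbad
      · -- good z' : x' ∈ I(z', v), claimB
        have hxIzv : x' ∈ gInterval G z' v := gInt_trans' hc hxI (gInt_symm hz'I)
        exact claimB hG hab (G.dist x' v) z' v x' rfl hxz'.symm hxIzv hgood hv hxbad
      · -- bad z' : recurse
        have hd : G.dist u z' = M - 1 := by have := dcomm G u z'; omega
        exact IH2 (M - 1) (by omega) z' hd hz'Iuv hbad
  exact aux (G.dist u x) x rfl hx hxW

lemma Wh_halfspace (hG : IsMedianGraph G) {a b : V} (hab : G.Adj a b) :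
    IsHalfspace G (Wh G a b) := by
  refine ⟨⟨a, ?_⟩, ⟨b, ?_⟩, Wh_convex hG hab, ?_⟩
  · simp only [Wh, Set.mem_setOf_eq, SimpleGraph.dist_self]
    rw [dist1.2 hab]; omega
  · simp only [Set.mem_compl_iff, Wh, Set.mem_setOf_eq, SimpleGraph.dist_self]
    have := dcomm G b a
    rw [dist1.2 hab.symm]
    omega
  · rw [Wh_compl hG hab]
    exact Wh_convex hG hab.symm

lemma mem_Wh_self {a b : V} (hab : G.Adj a b) : a ∈ Wh G a b := by
  simp only [Wh, Set.mem_setOf_eq, SimpleGraph.dist_self]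
  rw [dist1.2 hab]; omega

lemma convex_inter {A B : Set V} (hA : GConvex G A) (hB : GConvex G B) :
    GConvex G (A ∩ B) := fun x hx y hy z hz =>
  ⟨hA x hx.1 y hy.1 hz, hB x hx.2 y hy.2 hz⟩

lemma convex_univ : GConvex G (Set.univ : Set V) := fun _ _ _ _ _ _ => trivial

lemma convex_singleton (hc : G.Connected) (v : V) : GConvex G ({v} : Set V) := by
  intro x hx y hy z hz
  simp only [Set.mem_singleton_iff] at hx hy ⊢
  subst hx; subst hy
  simp only [mem_gInt, SimpleGraph.dist_self] at hz
  exact (dist0 hc).1 (by omega)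

lemma nbr_unique (hG : IsMedianGraph G) {A : Set V} (hA : GConvex G A) {z n₁ n₂ : V}
    (hz : z ∉ A) (h1 : n₁ ∈ A) (h2 : n₂ ∈ A) (a1 : G.Adj z n₁) (a2 : G.Adj z n₂) :
    n₁ = n₂ := by
  have hc := hG.1
  by_contra hne
  have hd2 : G.dist n₁ n₂ = 2 := by
    have t := tri hc n₁ z n₂
    have d1 : G.dist z n₁ = 1 := dist1.2 a1
    have d2 : G.dist z n₂ = 1 := dist1.2 a2
    have c1 := dcomm G n₁ z
    have hne0 : G.dist n₁ n₂ ≠ 0 := fun h => hne ((dist0 hc).1 h)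
    have hne1 : G.dist n₁ n₂ ≠ 1 := by
      intro h
      exact parity_ne hG (dist1.1 h) z (by omega)
    omega
  have : z ∈ gInterval G n₁ n₂ := by
    simp only [mem_gInt]
    have d1 : G.dist z n₁ = 1 := dist1.2 a1
    have d2 : G.dist z n₂ = 1 := dist1.2 a2
    have c1 := dcomm G n₁ z
    omega
  exact hz (hA n₁ h1 n₂ h2 this)

lemma gate_exists (hG : IsMedianGraph G) {K : Set V} (hK : GConvex G K)
    (hne : K.Nonempty) (z : V) :
    ∃ g ∈ K, (∀ k ∈ K, g ∈ gInterval G z k) ∧ ∀ k ∈ K, G.dist z g ≤ G.dist z k := by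
  have hc := hG.1
  set S : Set ℕ := (fun k => G.dist z k) '' K with hS
  have hSne : S.Nonempty := hne.image _
  obtain ⟨g, hgK, hgd0⟩ := Nat.sInf_mem hSne
  have hgd : G.dist z g = sInf S := hgd0
  refine ⟨g, hgK, ?_, ?_⟩
  · intro k hk
    set m := med hG z g k with hmdef
    obtain ⟨h1, h2, h3⟩ := med_spec hG z g k
    rw [← hmdef] at h1 h2 h3
    have hmK : m ∈ K := hK g hgK k hk h2
    have hmin : G.dist z g ≤ G.dist z m := by
      rw [hgd]
      exact Nat.sInf_le ⟨m, hmK, rfl⟩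
    simp only [mem_gInt] at h1 h3 ⊢
    have hmg : G.dist m g = 0 := by omega
    have : m = g := (dist0 hc).1 hmg
    rw [← this]
    exact h3
  · intro k hk
    rw [hgd]
    exact Nat.sInf_le ⟨k, hk, rfl⟩

lemma edge_halfspace (hG : IsMedianGraph G) {H : Set V} (hH : IsHalfspace G H) {u v : V}
    (hu : u ∈ H) (hv : v ∉ H) (huv : G.Adj u v) : H = Wh G u v := by
  have hc := hG.1
  have duv : G.dist u v = 1 := dist1.2 huv
  ext w
  constructor
  · intro hw
    rcases parity hG huv w with h | h
    · simp only [Wh, Set.mem_setOf_eq]; omega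
    · exfalso
      have : v ∈ gInterval G w u := by
        simp only [mem_gInt]
        have := dcomm G v u
        omega
      exact hv (hH.2.2.1 w hw u hu this)
  · intro hw
    by_contra hwH
    have : u ∈ gInterval G w v := by
      simp only [Wh, Set.mem_setOf_eq] at hw
      rcases parity hG huv w with h | h
      · simp only [mem_gInt]; omega
      · omega
    exact (hH.2.2.2 w hwH v hv this) hu

lemma Wh_total (hG : IsMedianGraph G) {u v : V} (huv : G.Adj u v) (w : V) :
    w ∈ Wh G u v ∨ w ∈ Wh G v u := by
  rcases parity hG huv w with h | h
  · left; simp only [Wh, Set.mem_setOf_eq]; omega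
  · right; simp only [Wh, Set.mem_setOf_eq]; omega

lemma crossing_edge (hG : IsMedianGraph G) {A H : Set V} (hA : GConvex G A) {z u : V}
    (hz : z ∈ A) (hzH : z ∈ H) (hu : u ∈ A) (huH : u ∉ H) :
    ∃ p q, p ∈ A ∧ q ∈ A ∧ p ∈ H ∧ q ∉ H ∧ G.Adj p q := by
  have hc := hG.1
  have aux : ∀ M : ℕ, ∀ z', G.dist z' u = M → z' ∈ A → z' ∈ H →
      ∃ p q, p ∈ A ∧ q ∈ A ∧ p ∈ H ∧ q ∉ H ∧ G.Adj p q := by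
    intro M
    induction M using Nat.strong_induction_on with
    | _ M IH =>
      intro z' hM hzA hzH'
      rcases Nat.eq_zero_or_pos M with hM0 | hMpos
      · exact absurd ((dist0 hc).1 (by omega) : z' = u) (fun h => huH (h ▸ hzH'))
      obtain ⟨y, hzy, hyu, hyI⟩ := exists_nbr hc (show G.dist z' u = (M-1)+1 by omega)
      have hyA : y ∈ A := hA z' hzA u hu hyI
      by_cases hyH : y ∈ H
      · exact IH (M - 1) (by omega) y hyu hyA hyH
      · exact ⟨z', y, hzA, hyA, hzH', hyH, hzy⟩
  exact aux (G.dist z u) z rfl hz hzH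

/-! walks and induced subgraphs -/

lemma walk_support_interval (hc : G.Connected) {x y : V} (p : G.Walk x y)
    (hp : p.length = G.dist x y) : ∀ z ∈ p.support, z ∈ gInterval G x y := by
  induction p with
  | nil =>
    intro z hz
    simp only [SimpleGraph.Walk.support_nil, List.mem_singleton] at hz
    subst hz; exact gInt_left _ _
  | cons h q IH =>
    rename_i x₀ x₁ y₀
    intro z hz
    simp only [SimpleGraph.Walk.length_cons] at hp
    have h1 : G.dist x₁ y₀ ≤ q.length := SimpleGraph.dist_le q
    have h2 : G.dist x₀ y₀ ≤ 1 + G.dist x₁ y₀ := by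
      have := tri hc x₀ x₁ y₀
      rw [dist1.2 h] at this; omega
    have hq : q.length = G.dist x₁ y₀ := by omega
    have hx₁ : x₁ ∈ gInterval G x₀ y₀ := by
      simp only [mem_gInt]
      rw [dist1.2 h]; omega
    simp only [SimpleGraph.Walk.support_cons, List.mem_cons] at hz
    rcases hz with rfl | hz
    · exact gInt_left _ _
    · exact gInt_trans'' hc hx₁ (IH hq z hz)

lemma walk_transfer {A : Set V} {x y : V} (p : G.Walk x y)
    (hsup : ∀ z ∈ p.support, z ∈ A) (hx : x ∈ A) (hy : y ∈ A) :
    ∃ q : (G.induce A).Walk ⟨x, hx⟩ ⟨y, hy⟩, q.length = p.length := by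
  induction p with
  | nil => exact ⟨SimpleGraph.Walk.nil, rfl⟩
  | cons h q IH =>
    rename_i x₀ x₁ y₀
    have hx₁ : x₁ ∈ A := hsup x₁ (by simp)
    obtain ⟨q', hq'⟩ := IH (fun z hz => hsup z (by simp [hz])) hx₁ hy
    refine ⟨SimpleGraph.Walk.cons (by exact h) q', ?_⟩
    exact congrArg (· + 1) hq'

lemma induced_dist (hG : IsMedianGraph G) {A : Set V} (hA : GConvex G A) {x y : V}
    (hx : x ∈ A) (hy : y ∈ A) :
    (G.induce A).dist ⟨x, hx⟩ ⟨y, hy⟩ = G.dist x y := by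
  have hc := hG.1
  obtain ⟨p, hp⟩ := hc.exists_walk_length_eq_dist x y
  have hsup : ∀ z ∈ p.support, z ∈ A := fun z hz =>
    hA x hx y hy (walk_support_interval hc p hp z hz)
  obtain ⟨q, hq⟩ := walk_transfer p hsup hx hy
  have hle : (G.induce A).dist ⟨x, hx⟩ ⟨y, hy⟩ ≤ G.dist x y := by
    have := SimpleGraph.dist_le q
    omega
  have hge : G.dist x y ≤ (G.induce A).dist ⟨x, hx⟩ ⟨y, hy⟩ := by
    have hreach : (G.induce A).Reachable ⟨x, hx⟩ ⟨y, hy⟩ := ⟨q⟩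
    obtain ⟨r, hr⟩ := hreach.exists_walk_length_eq_dist
    have : G.dist x y ≤ (r.map (SimpleGraph.Embedding.induce A).toHom).length :=
      SimpleGraph.dist_le _
    rw [SimpleGraph.Walk.length_map] at this
    omega
  omega

lemma induced_connected (hG : IsMedianGraph G) {A : Set V} (hA : GConvex G A)
    (hne : A.Nonempty) : (G.induce A).Connected := by
  have hc := hG.1
  rw [SimpleGraph.connected_iff]
  refine ⟨?_, hne.to_subtype⟩
  rintro ⟨x, hx⟩ ⟨y, hy⟩
  obtain ⟨p, hp⟩ := hc.exists_walk_length_eq_dist x y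
  have hsup : ∀ z ∈ p.support, z ∈ A := fun z hz =>
    hA x hx y hy (walk_support_interval hc p hp z hz)
  obtain ⟨q, _⟩ := walk_transfer p hsup hx hy
  exact ⟨q⟩

/-! Traces, minimal traces, peeling -/

def IsCut (G : SimpleGraph V) (x₀ : V) (C H : Set V) : Prop :=
  IsHalfspace G H ∧ x₀ ∉ H ∧ (H ∩ C).Nonempty

def IsMinTr (G : SimpleGraph V) (x₀ : V) (C T : Set V) : Prop :=
  (∃ H, IsCut G x₀ C H ∧ H ∩ C = T) ∧
  ∀ K, IsCut G x₀ C K → K ∩ C ⊆ T → K ∩ C = T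

def Fam (G : SimpleGraph V) (x₀ : V) (Φ : Set V → ℕ) (C : Set V) (c : ℕ) : Set (Set V) :=
  {T | IsMinTr G x₀ C T ∧ ∃ H, IsCut G x₀ C H ∧ H ∩ C = T ∧ Φ H = c}

def peel (G : SimpleGraph V) (x₀ : V) (Φ : Set V → ℕ) (C : Set V) (c : ℕ) : Set V :=
  C \ ⋃₀ (Fam G x₀ Φ C c)

variable {x₀ : V} {Φ : Set V → ℕ} {C : Set V}

lemma cut_of_ne (hG : IsMedianGraph G) {v : V} (hv : v ∈ C) (hne : v ≠ x₀) :
    ∃ H, IsCut G x₀ C H ∧ v ∈ H := by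
  have hc := hG.1
  have hd : 0 < G.dist x₀ v := hc.pos_dist_of_ne (Ne.symm hne)
  obtain ⟨z, hxz, hzv, hzI⟩ := exists_nbr hc (show G.dist x₀ v = (G.dist x₀ v - 1) + 1 by omega)
  have hzx1 : G.dist x₀ z = 1 := dist1.2 hxz
  refine ⟨Wh G z x₀, ⟨Wh_halfspace hG hxz.symm, ?_, ⟨v, ?_, hv⟩⟩, ?_⟩
  · simp only [Wh, Set.mem_setOf_eq, SimpleGraph.dist_self, not_lt]
    have := dcomm G x₀ z
    omega
  · simp only [Wh, Set.mem_setOf_eq]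
    have c1 := dcomm G v z; have c2 := dcomm G v x₀
    omega
  · simp only [Wh, Set.mem_setOf_eq]
    have c1 := dcomm G v z; have c2 := dcomm G v x₀
    omega

lemma mintr_sub (hT : IsMinTr G x₀ C T) : T ⊆ C := by
  obtain ⟨⟨H, _, rfl⟩, _⟩ := hT
  exact Set.inter_subset_right

lemma fam_disjoint (hΦ : ∀ H K, IsHalfspace G H → IsHalfspace G K → Crossing H K → Φ H ≠ Φ K)
    {c : ℕ} {T T' : Set V} (hT : T ∈ Fam G x₀ Φ C c) (hT' : T' ∈ Fam G x₀ Φ C c)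
    (hne : T ≠ T') : T ∩ T' = ∅ := by
  obtain ⟨hTm, H, hHcut, hHeq, hHc⟩ := hT
  obtain ⟨hTm', H', hHcut', hHeq', hHc'⟩ := hT'
  by_contra hcap
  obtain ⟨y, hy⟩ := Set.nonempty_iff_ne_empty.2 hcap
  have hnc : ¬ Crossing H H' := by
    intro hx
    exact hΦ H H' hHcut.1 hHcut'.1 hx (hHc.trans hHc'.symm)
  have h1 : (H ∩ H').Nonempty := ⟨y, (hHeq ▸ hy.1 : y ∈ H ∩ C).1, (hHeq' ▸ hy.2 : y ∈ H' ∩ C).1⟩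
  have h4 : (Hᶜ ∩ H'ᶜ).Nonempty := ⟨x₀, hHcut.2.1, hHcut'.2.1⟩
  have : ¬ (H ∩ H'ᶜ).Nonempty ∨ ¬ (Hᶜ ∩ H').Nonempty := by
    by_contra hcon
    push_neg at hcon
    exact hnc ⟨h1, hcon.1, hcon.2, h4⟩
  rcases this with h | h
  · -- H ⊆ H'
    have hsub : H ⊆ H' := by
      intro w hw
      by_contra hw'
      exact h ⟨w, hw, hw'⟩
    have : H ∩ C = T' := hTm'.2 H hHcut (by rw [← hHeq']; exact Set.inter_subset_inter_left _ hsub)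
    exact hne (hHeq ▸ this)
  · have hsub : H' ⊆ H := by
      intro w hw
      by_contra hw'
      exact h ⟨w, hw', hw⟩
    have : H' ∩ C = T := hTm.2 H' hHcut' (by rw [← hHeq]; exact Set.inter_subset_inter_left _ hsub)
    exact hne (hHeq' ▸ this).symm

lemma mintr_extremal (hG : IsMedianGraph G) (hC : GConvex G C) (hx₀ : x₀ ∈ C)
    {T : Set V} (hT : IsMinTr G x₀ C T) {v : V} (hv : v ∈ T) :
    ∃! z, (z ∈ C ∧ z ∉ T) ∧ G.Adj v z := by
  have hc := hG.1
  obtain ⟨⟨H, hHcut, hHeq⟩, hmin⟩ := hT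
  have hvC : v ∈ C := (hHeq ▸ hv : v ∈ H ∩ C).2
  have hvH : v ∈ H := (hHeq ▸ hv : v ∈ H ∩ C).1
  have hAconv : GConvex G (C ∩ Hᶜ) := convex_inter hC hHcut.1.2.2.2
  have hAne : (C ∩ Hᶜ).Nonempty := ⟨x₀, hx₀, hHcut.2.1⟩
  have hnotT : ∀ w, w ∈ C ∩ Hᶜ ↔ (w ∈ C ∧ w ∉ T) := by
    intro w
    constructor
    · rintro ⟨h1, h2⟩
      exact ⟨h1, fun hw => h2 (hHeq ▸ hw : w ∈ H ∩ C).1⟩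
    · rintro ⟨h1, h2⟩
      refine ⟨h1, fun hw => h2 ?_⟩
      rw [← hHeq]; exact ⟨hw, h1⟩
  -- existence
  have hex : ∃ z, (z ∈ C ∧ z ∉ T) ∧ G.Adj v z := by
    obtain ⟨g, hgA, hgate, hgmin⟩ := gate_exists hG hAconv hAne v
    have hgne : v ≠ g := fun h => (h ▸ hgA).2 hvH
    have hgd : 0 < G.dist v g := hc.pos_dist_of_ne hgne
    rcases Nat.lt_or_ge (G.dist v g) 2 with h1 | h2
    · exact ⟨g, (hnotT g).1 hgA, dist1.1 (by omega)⟩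
    · exfalso
      obtain ⟨z₁, hvz₁, hz₁g, hz₁I⟩ := exists_nbr hc
        (show G.dist v g = (G.dist v g - 1) + 1 by omega)
      have hz₁C : z₁ ∈ C := (hC v hvC g hgA.1 hz₁I)
      have hz₁H : z₁ ∈ H := by
        by_contra hz₁H
        have := hgmin z₁ ⟨hz₁C, hz₁H⟩
        rw [dist1.2 hvz₁] at this
        omega
      -- the halfspace of the edge v z₁, containing v
      set W := Wh G v z₁ with hWdef
      have hWhs : IsHalfspace G W := Wh_halfspace hG hvz₁
      have hvW : v ∈ W := mem_Wh_self hvz₁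
      have hz₁W : z₁ ∉ W := by
        simp only [hWdef, Wh, Set.mem_setOf_eq, not_lt, SimpleGraph.dist_self]
        omega
      have hWx₀ : x₀ ∉ W := by
        have hgI : g ∈ gInterval G v x₀ := hgate x₀ ⟨hx₀, hHcut.2.1⟩
        have hz₁I₀ : z₁ ∈ gInterval G v x₀ := gInt_trans hc hgI hz₁I
        simp only [mem_gInt] at hz₁I₀
        simp only [hWdef, Wh, Set.mem_setOf_eq, not_lt]
        have d1 : G.dist v z₁ = 1 := dist1.2 hvz₁
        have c1 := dcomm G x₀ z₁; have c2 := dcomm G x₀ v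
        omega
      have hWsub : W ∩ C ⊆ T := by
        rintro u ⟨huW, huC⟩
        rw [← hHeq]
        refine ⟨?_, huC⟩
        by_contra huH
        have hgI : g ∈ gInterval G v u := hgate u ⟨huC, huH⟩
        have hz₁Iu : z₁ ∈ gInterval G v u := gInt_trans hc hgI hz₁I
        simp only [mem_gInt] at hz₁Iu
        simp only [hWdef, Wh, Set.mem_setOf_eq] at huW
        have d1 : G.dist v z₁ = 1 := dist1.2 hvz₁
        have c1 := dcomm G u z₁; have c2 := dcomm G u v
        omega
      have : W ∩ C = T := hmin W ⟨hWhs, hWx₀, ⟨v, hvW, hvC⟩⟩ hWsub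
      have hz₁T : z₁ ∈ T := by rw [← hHeq]; exact ⟨hz₁H, hz₁C⟩
      rw [← this] at hz₁T
      exact hz₁W hz₁T.1
  obtain ⟨z, hz, hadj⟩ := hex
  refine ⟨z, ⟨hz, hadj⟩, ?_⟩
  rintro z' ⟨hz', hadj'⟩
  exact nbr_unique hG hAconv (fun h => h.2 hvH) ((hnotT z').2 hz') ((hnotT z).2 hz) hadj' hadj

lemma mintr_noadj (hG : IsMedianGraph G) {T T' : Set V}
    (hT : IsMinTr G x₀ C T) (hT' : IsMinTr G x₀ C T') (hdisj : T ∩ T' = ∅)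
    {u u' : V} (hu : u ∈ T) (hu' : u' ∈ T') : ¬ G.Adj u u' := by
  intro hadj
  obtain ⟨⟨H, hHcut, hHeq⟩, _⟩ := hT
  obtain ⟨⟨H', hHcut', hHeq'⟩, _⟩ := hT'
  have huC : u ∈ C := (hHeq ▸ hu : u ∈ H ∩ C).2
  have huC' : u' ∈ C := (hHeq' ▸ hu' : u' ∈ H' ∩ C).2
  have hu'H : u' ∉ H := by
    intro h
    have : u' ∈ T ∩ T' := ⟨hHeq ▸ ⟨h, huC'⟩, hu'⟩
    rw [hdisj] at this; exact this
  have huH' : u ∉ H' := by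
    intro h
    have : u ∈ T ∩ T' := ⟨hu, hHeq' ▸ ⟨h, huC⟩⟩
    rw [hdisj] at this; exact this
  have e1 : H = Wh G u u' := edge_halfspace hG hHcut.1 (hHeq ▸ hu : u ∈ H ∩ C).1 hu'H hadj
  have e2 : H' = Wh G u' u := edge_halfspace hG hHcut'.1 (hHeq' ▸ hu' : u' ∈ H' ∩ C).1 huH' hadj.symm
  rcases Wh_total hG hadj x₀ with h | h
  · exact hHcut.2.1 (e1 ▸ h)
  · exact hHcut'.2.1 (e2 ▸ h)

lemma peel_subset : peel G x₀ Φ C c ⊆ C := Set.diff_subset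

lemma x₀_mem_peel (hx₀ : x₀ ∈ C) : x₀ ∈ peel G x₀ Φ C c := by
  refine ⟨hx₀, ?_⟩
  rintro ⟨τ, hτ, hx⟩
  obtain ⟨⟨H, hHcut, hHeq⟩, _⟩ := hτ.1
  exact hHcut.2.1 (hHeq ▸ hx : x₀ ∈ H ∩ C).1

lemma peel_convex (hC : GConvex G C) : GConvex G (peel G x₀ Φ C c) := by
  intro x hx y hy z hz
  refine ⟨hC x hx.1 y hy.1 hz, ?_⟩
  rintro ⟨τ, hτ, hzτ⟩
  obtain ⟨⟨H, hHcut, hHeq⟩, _⟩ := hτ.1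
  have hxH : x ∈ Hᶜ := fun h => hx.2 ⟨τ, hτ, hHeq ▸ ⟨h, hx.1⟩⟩
  have hyH : y ∈ Hᶜ := fun h => hy.2 ⟨τ, hτ, hHeq ▸ ⟨h, hy.1⟩⟩
  exact ((hHcut.1.2.2.2 x hxH y hyH hz) : z ∈ Hᶜ) (hHeq ▸ hzτ : z ∈ H ∩ C).1

lemma peel_kill {c : ℕ} {τ H : Set V} (hτ : τ ∈ Fam G x₀ Φ C c) (hHeq : H ∩ C = τ) :
    H ∩ peel G x₀ Φ C c = ∅ := by
  ext w
  simp only [Set.mem_inter_iff, Set.mem_empty_iff_false, iff_false, not_and]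
  intro hwH hwp
  exact hwp.2 ⟨τ, hτ, hHeq ▸ ⟨hwH, hwp.1⟩⟩

/-- THE STABILITY LEMMA -/
lemma stability (hG : IsMedianGraph G) (hC : GConvex G C) (hx₀ : x₀ ∈ C)
    (hΦ : ∀ H K, IsHalfspace G H → IsHalfspace G K → Crossing H K → Φ H ≠ Φ K)
    {c : ℕ} {K H : Set V}
    (hKh : IsHalfspace G K) (hKx : x₀ ∉ K)
    (hHh : IsHalfspace G H) (hHx : x₀ ∉ H)
    (hne : (K ∩ peel G x₀ Φ C c).Nonempty)
    (hsub : K ∩ peel G x₀ Φ C c ⊆ H ∩ peel G x₀ Φ C c) :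
    K ∩ C ⊆ H ∩ C := by
  have hc := hG.1
  set C' := peel G x₀ Φ C c with hC'def
  rintro u ⟨huK, huC⟩
  refine ⟨?_, huC⟩
  by_contra huH
  obtain ⟨z, hzK, hzC'⟩ := hne
  have hzH : z ∈ H := (hsub ⟨hzK, hzC'⟩).1
  have hKCconv : GConvex G (K ∩ C) := convex_inter hKh.2.2.1 hC
  obtain ⟨p, q, hpA, hqA, hpH, hqH, hpq⟩ :=
    crossing_edge hG hKCconv (⟨hzK, peel_subset hzC'⟩ : z ∈ K ∩ C) hzH ⟨huK, huC⟩ huH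
  have hqC' : q ∉ C' := by
    intro hq
    exact hqH (hsub ⟨hqA.1, hq⟩).1
  have hqF : ∃ τ ∈ Fam G x₀ Φ C c, q ∈ τ := by
    by_contra hcon
    push_neg at hcon
    exact hqC' ⟨hqA.2, fun ⟨τ, hτ, hqτ⟩ => hcon τ hτ hqτ⟩
  obtain ⟨τ, hτF, hqτ⟩ := hqF
  obtain ⟨Hj, hHjcut, hHjeq⟩ := hτF.1.1
  have hqHj : q ∈ Hj := (hHjeq ▸ hqτ : q ∈ Hj ∩ C).1
  by_cases hpτ : p ∈ τ
  · -- the cross-neighbor of q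
    obtain ⟨z', ⟨⟨hz'C, hz'τ⟩, hz'adj⟩, hz'uniq⟩ :=
      mintr_extremal hG hC hx₀ hτF.1 hqτ
    have hz'C' : z' ∈ C' := by
      refine ⟨hz'C, ?_⟩
      rintro ⟨τ', hτ', hz'τ'⟩
      have hneτ : τ ≠ τ' := fun h => hz'τ (h ▸ hz'τ')
      have hd := fam_disjoint hΦ hτF hτ' hneτ
      exact (mintr_noadj hG hτF.1 hτ'.1 hd hqτ hz'τ') hz'adj
    have hz'H : z' ∉ H := by
      intro hz'H
      have : p = z' := nbr_unique hG (convex_inter hHh.2.2.1 hC)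
        (fun h => hqH h.1) ⟨hpH, hpA.2⟩ ⟨hz'H, hz'C⟩ hpq.symm hz'adj
      exact hz'τ (this ▸ hpτ)
    have hz'K : z' ∉ K := by
      intro hz'K
      exact hz'H (hsub ⟨hz'K, hz'C'⟩).1
    have eK : K = Wh G q z' := edge_halfspace hG hKh hqA.1 hz'K hz'adj
    have eHj : Hj = Wh G q z' := edge_halfspace hG hHjcut.1 hqHj
      (fun h => hz'τ (hHjeq ▸ ⟨h, hz'C⟩ : z' ∈ τ)) hz'adj
    have : K ∩ C' = ∅ := by
      rw [eK, ← eHj]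
      exact peel_kill hτF hHjeq
    have hzbad : z ∈ (∅ : Set V) := this ▸ (⟨hzK, hzC'⟩ : z ∈ K ∩ C')
    exact hzbad
  · have hpHj : p ∉ Hj := fun h => hpτ (hHjeq ▸ ⟨h, hpA.2⟩ : p ∈ τ)
    have e1 : H = Wh G p q := edge_halfspace hG hHh hpH hqH hpq
    have e2 : Hj = Wh G q p := edge_halfspace hG hHjcut.1 hqHj hpHj hpq.symm
    rcases Wh_total hG hpq x₀ with h | h
    · exact hHx (e1 ▸ h)
    · exact hHjcut.2.1 (e2 ▸ h)

lemma cross_gate (hG : IsMedianGraph G) {A : Set V} (hA : GConvex G A) (hAne : A.Nonempty)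
    {y v : V} (hyA : y ∉ A) (hvA : v ∈ A) (hadj : G.Adj y v) :
    ∀ k ∈ A, G.dist y k = 1 + G.dist v k := by
  obtain ⟨g, hgA, hgate, hgmin⟩ := gate_exists hG hA hAne y
  have hgv : g = v := by
    have h1 : G.dist y g ≤ 1 := by
      have := hgmin v hvA
      rw [dist1.2 hadj] at this
      exact this
    have h0 : G.dist y g ≠ 0 := fun h => hyA (((dist0 hG.1).1 h) ▸ hgA)
    exact nbr_unique hG hA hyA hgA hvA (dist1.1 (by omega)) hadj
  subst hgv
  intro k hk
  have h2 := hgate k hk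
  simp only [mem_gInt] at h2
  rw [dist1.2 hadj] at h2
  omega

lemma mintr_convex (hC : GConvex G C) {T : Set V} (hT : IsMinTr G x₀ C T) :
    GConvex G T := by
  obtain ⟨⟨H, hHcut, hHeq⟩, _⟩ := hT
  exact hHeq ▸ convex_inter hHcut.1.2.2.1 hC

lemma cross_pair_dist (hG : IsMedianGraph G) (hC : GConvex G C) (hx₀ : x₀ ∈ C) {T : Set V}
    (hT : IsMinTr G x₀ C T) {v v' y y' : V}
    (hv : v ∈ T) (hv' : v' ∈ T) (hyC : y ∈ C) (hyT : y ∉ T) (hy'C : y' ∈ C) (hy'T : y' ∉ T)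
    (hadj : G.Adj v y) (hadj' : G.Adj v' y') :
    G.dist y y' = G.dist v v' := by
  have hTconv := mintr_convex hC hT
  obtain ⟨⟨H, hHcut, hHeq⟩, _⟩ := hT
  have hTne : T.Nonempty := ⟨v, hv⟩
  have hAconv : GConvex G (C ∩ Hᶜ) := convex_inter hC hHcut.1.2.2.2
  have hAne : (C ∩ Hᶜ).Nonempty := ⟨x₀, hx₀, hHcut.2.1⟩
  have hyA : y ∈ C ∩ Hᶜ := ⟨hyC, fun h => hyT (hHeq ▸ (⟨h, hyC⟩ : y ∈ H ∩ C))⟩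
  have hy'A : y' ∈ C ∩ Hᶜ := ⟨hy'C, fun h => hy'T (hHeq ▸ (⟨h, hy'C⟩ : y' ∈ H ∩ C))⟩
  have hv'A : v' ∉ C ∩ Hᶜ := fun h => h.2 (hHeq ▸ hv' : v' ∈ H ∩ C).1
  have e1 : G.dist y v' = 1 + G.dist v v' := cross_gate hG hTconv hTne hyT hv hadj.symm v' hv'
  have e2 : G.dist v' y = 1 + G.dist y' y := cross_gate hG hAconv hAne hv'A hy'A hadj' y hyA
  have c1 := dcomm G y v'; have c2 := dcomm G y' y
  omega

lemma crossN_convex (hG : IsMedianGraph G) (hC : GConvex G C) (hx₀ : x₀ ∈ C) {T : Set V}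
    (hT : IsMinTr G x₀ C T) :
    GConvex G {z | (z ∈ C ∧ z ∉ T) ∧ ∃ v ∈ T, G.Adj v z} := by
  have hc := hG.1
  have hTconv := mintr_convex hC hT
  intro x hx y hy z hz
  obtain ⟨⟨hxC, hxT⟩, u, huT, hadjux⟩ := hx
  obtain ⟨⟨hyC, hyT⟩, u', hu'T, hadjuy⟩ := hy
  obtain ⟨⟨H, hHcut, hHeq⟩, hTmin⟩ := id hT
  have hAconv : GConvex G (C ∩ Hᶜ) := convex_inter hC hHcut.1.2.2.2
  have hAne : (C ∩ Hᶜ).Nonempty := ⟨x₀, hx₀, hHcut.2.1⟩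
  have hmemA : ∀ w, w ∈ C → w ∉ T → w ∈ C ∩ Hᶜ := fun w h1 h2 =>
    ⟨h1, fun h => h2 (hHeq ▸ (⟨h, h1⟩ : w ∈ H ∩ C))⟩
  have hxA := hmemA x hxC hxT
  have hyA := hmemA y hyC hyT
  have hzA : z ∈ C ∩ Hᶜ := hAconv x hxA y hyA hz
  have hzT : z ∉ T := fun h => hzA.2 (hHeq ▸ h : z ∈ H ∩ C).1
  refine ⟨⟨hzA.1, hzT⟩, ?_⟩
  have huA : u ∉ C ∩ Hᶜ := fun h => h.2 (hHeq ▸ huT : u ∈ H ∩ C).1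
  have hu'A : u' ∉ C ∩ Hᶜ := fun h => h.2 (hHeq ▸ hu'T : u' ∈ H ∩ C).1
  have e1 : G.dist u z = 1 + G.dist x z := cross_gate hG hAconv hAne huA hxA hadjux z hzA
  have e2 : G.dist u' z = 1 + G.dist y z := cross_gate hG hAconv hAne hu'A hyA hadjuy z hzA
  have e3 : G.dist x y = G.dist u u' :=
    cross_pair_dist hG hC hx₀ hT huT hu'T hxC hxT hyC hyT hadjux hadjuy
  set p := med hG u u' z with hpdef
  obtain ⟨hp1, hp2, hp3⟩ := med_spec hG u u' z
  rw [← hpdef] at hp1 hp2 hp3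
  have hpT : p ∈ T := hTconv u huT u' hu'T hp1
  simp only [mem_gInt] at hp1 hp2 hp3 hz
  have hpz : G.dist p z = 1 := by
    have c1 := dcomm G u' p; have c2 := dcomm G x z; have c3 := dcomm G y z
    have c4 := dcomm G z y
    omega
  exact ⟨p, hpT, dist1.1 hpz⟩

lemma conn_iso {W W' : Type} {G1 : SimpleGraph W} {G2 : SimpleGraph W'} (e : G1 ≃g G2)
    (h : G1.Connected) : G2.Connected := by
  rw [SimpleGraph.connected_iff] at h ⊢
  exact ⟨(SimpleGraph.Iso.preconnected_iff e).1 h.1, Nonempty.map e h.2⟩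

lemma induced_dist' (hG : IsMedianGraph G) {A : Set V} (hA : GConvex G A) (x y : ↥A) :
    (G.induce A).dist x y = G.dist ↑x ↑y := by
  obtain ⟨x, hx⟩ := x
  obtain ⟨y, hy⟩ := y
  exact induced_dist hG hA hx hy

lemma glue_step (hG : IsMedianGraph G) (hC : GConvex G C) (hx₀ : x₀ ∈ C)
    (hΦ : ∀ H K, IsHalfspace G H → IsHalfspace G K → Crossing H K → Φ H ≠ Φ K)
    (c : ℕ) {m : ℕ}
    (hm : RegCollapsible (G.induce (peel G x₀ Φ C c)) m) :
    ∃ m', RegCollapsible (G.induce C) m' := by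
  classical
  by_cases hF : Fam G x₀ Φ C c = ∅
  · have : peel G x₀ Φ C c = C := by simp [peel, hF]
    rw [this] at hm
    exact ⟨m, hm⟩
  have hc := hG.1
  set C' := peel G x₀ Φ C c with hC'def
  have hC'C : C' ⊆ C := peel_subset
  have hC'conv : GConvex G C' := peel_convex hC
  have hC'τ : ∀ z : V, z ∈ C' → ∀ τ ∈ Fam G x₀ Φ C c, z ∉ τ := by
    intro z hz τ hτ hzτ
    exact hz.2 ⟨τ, hτ, hzτ⟩
  have hτuniq : ∀ {τ τ' : Set V}, τ ∈ Fam G x₀ Φ C c → τ' ∈ Fam G x₀ Φ C c →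
      ∀ {v : V}, v ∈ τ → v ∈ τ' → τ = τ' := by
    intro τ τ' hτ hτ' v hv hv'
    by_contra hne
    have hd := fam_disjoint hΦ hτ hτ' hne
    have : v ∈ (∅ : Set V) := hd ▸ (⟨hv, hv'⟩ : v ∈ τ ∩ τ')
    exact this
  have hch : ∀ v : V, ∃ q : Set V × V, v ∈ ⋃₀ (Fam G x₀ Φ C c) →
      q.1 ∈ Fam G x₀ Φ C c ∧ v ∈ q.1 ∧ (q.2 ∈ C ∧ q.2 ∉ q.1) ∧ G.Adj v q.2 := by
    intro v
    by_cases h : v ∈ ⋃₀ (Fam G x₀ Φ C c)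
    · obtain ⟨τ, hτ, hvτ⟩ := h
      obtain ⟨z, ⟨⟨hz1, hz2⟩, hz3⟩, -⟩ := mintr_extremal hG hC hx₀ hτ.1 hvτ
      exact ⟨(τ, z), fun _ => ⟨hτ, hvτ, ⟨hz1, hz2⟩, hz3⟩⟩
    · exact ⟨(∅, v), fun h' => absurd h' h⟩
  choose fc hfc using hch
  have hbC' : ∀ v, v ∈ ⋃₀ (Fam G x₀ Φ C c) → (fc v).2 ∈ C' := by
    intro v h
    obtain ⟨hτ, hvτ, ⟨hbC, hbτ⟩, hadj⟩ := hfc v h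
    refine ⟨hbC, ?_⟩
    rintro ⟨τ', hτ', hbτ'⟩
    by_cases he : (fc v).1 = τ'
    · exact hbτ (he ▸ hbτ')
    · exact (mintr_noadj hG hτ.1 hτ'.1 (fam_disjoint hΦ hτ hτ' he) hvτ hbτ') hadj
  have hbuniq : ∀ v, v ∈ ⋃₀ (Fam G x₀ Φ C c) → ∀ z : V, z ∈ C → z ∉ (fc v).1 →
      G.Adj v z → z = (fc v).2 := by
    intro v h z hzC hzτ hadj
    obtain ⟨hτ, hvτ, ⟨hbC, hbτ⟩, hadjb⟩ := hfc v h
    obtain ⟨w, -, huniq⟩ := mintr_extremal hG hC hx₀ hτ.1 hvτ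
    rw [huniq z ⟨⟨hzC, hzτ⟩, hadj⟩, huniq (fc v).2 ⟨⟨hbC, hbτ⟩, hadjb⟩]
  set J := {τ : Set V // τ ∈ Fam G x₀ Φ C c} with hJdef
  set L : J → Set ↥C' := fun j => {y : ↥C' | ∃ v ∈ (j : Set V), G.Adj v ↑y} with hLdef
  have hrev : ∀ (j : J) (y : ↥C'), ∃ v : V, y ∈ L j → v ∈ (j : Set V) ∧ G.Adj v ↑y := by
    intro j y
    by_cases h : y ∈ L j
    · obtain ⟨v, hv, hadj⟩ := h
      exact ⟨v, fun _ => ⟨hv, hadj⟩⟩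
    · exact ⟨x₀, fun h' => absurd h' h⟩
  choose r hr using hrev
  have hruniq : ∀ (j : J) (y : ↥C') (v : V), v ∈ (j : Set V) → G.Adj v ↑y → v = r j y := by
    intro j y v hv hadj
    obtain ⟨hrj, hradj⟩ := hr j y ⟨v, hv, hadj⟩
    exact nbr_unique hG (mintr_convex hC j.2.1) (hC'τ _ y.2 _ j.2) hv hrj hadj.symm hradj.symm
  -- the inverse vertex map
  set GI : (↥C' ⊕ Σ j : J, ↥(L j)) → ↥C :=
    Sum.elim (fun y => ⟨↑y, hC'C y.2⟩)
      (fun p => ⟨r p.1 ↑p.2, mintr_sub p.1.2.1 (hr p.1 ↑p.2 p.2.2).1⟩) with hGIdef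
  have hGIinl : ∀ y : ↥C', (GI (Sum.inl y) : V) = ↑y := fun y => rfl
  have hGIinr : ∀ (j : J) (z : ↥(L j)), (GI (Sum.inr ⟨j, z⟩) : V) = r j ↑z := fun j z => rfl
  have hGIinj : Function.Injective GI := by
    rintro (y | ⟨j, z⟩) (y' | ⟨j', z'⟩) h
    · have hv2 : (y : V) = ↑y' := congrArg (Subtype.val : ↥C → V) h
      rw [show y = y' from Subtype.ext hv2]
    · exfalso
      have hval : (y : V) = r j' ↑z' := congrArg (Subtype.val : ↥C → V) h
      exact hC'τ _ y.2 _ j'.2 (hval ▸ (hr j' ↑z' z'.2).1)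
    · exfalso
      have hval : r j ↑z = ((y' : ↥C') : V) := congrArg (Subtype.val : ↥C → V) h
      exact hC'τ _ y'.2 _ j.2 (hval ▸ (hr j ↑z z.2).1)
    · have hval : r j ↑z = r j' ↑z' := congrArg (Subtype.val : ↥C → V) h
      have hjj : j = j' := Subtype.ext (hτuniq j.2 j'.2 (hr j ↑z z.2).1
        (hval ▸ (hr j' ↑z' z'.2).1))
      subst hjj
      have hzz : ((z : ↥C') : V) = ((z' : ↥C') : V) := by
        obtain ⟨w, -, huniq⟩ := mintr_extremal hG hC hx₀ j.2.1 (hr j ↑z z.2).1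
        have e1 := huniq ↑↑z ⟨⟨hC'C (z : ↥C').2, hC'τ _ (z : ↥C').2 _ j.2⟩, (hr j ↑z z.2).2⟩
        have e2 := huniq ↑↑z' ⟨⟨hC'C (z' : ↥C').2, hC'τ _ (z' : ↥C').2 _ j.2⟩,
          hval ▸ (hr j ↑z' z'.2).2⟩
        rw [e1, e2]
      rw [show z = z' from Subtype.ext (Subtype.ext hzz)]
  have hGIsurj : Function.Surjective GI := by
    rintro ⟨v, hv⟩
    by_cases h : v ∈ ⋃₀ (Fam G x₀ Φ C c)
    · obtain ⟨hτ, hvτ, ⟨hbC, hbτ⟩, hadj⟩ := hfc v h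
      refine ⟨Sum.inr ⟨⟨(fc v).1, hτ⟩, ⟨⟨(fc v).2, hbC' v h⟩, ⟨v, hvτ, hadj⟩⟩⟩, ?_⟩
      exact Subtype.ext (hruniq ⟨(fc v).1, hτ⟩ ⟨(fc v).2, hbC' v h⟩ v hvτ hadj).symm
    · exact ⟨Sum.inl ⟨v, hv, h⟩, Subtype.ext rfl⟩
  -- adjacency transfer
  have hadjiff : ∀ x y, (G.induce C).Adj (GI x) (GI y) ↔ (glueGraph (G.induce C') L).Adj x y := by
    rintro (y | ⟨j, z⟩) (y' | ⟨j', z'⟩) <;>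
      simp only [glueGraph, SimpleGraph.fromRel_adj, hGIdef, Sum.elim_inl, Sum.elim_inr,
        SimpleGraph.comap_adj, Function.Embedding.coe_subtype, SimpleGraph.induce]
    · -- inl inl
      constructor
      · intro h
        refine ⟨fun he => h.ne (by rw [Sum.inl_injective he]), Or.inl h⟩
      · rintro ⟨-, h | h⟩
        · exact h
        · exact h.symm
    · -- inl inr
      constructor
      · intro h
        refine ⟨Sum.inl_ne_inr, Or.inl ?_⟩
        obtain ⟨w, -, huniq⟩ := mintr_extremal hG hC hx₀ j'.2.1 (hr j' ↑z' z'.2).1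
        have e1 := huniq ↑y ⟨⟨hC'C y.2, hC'τ _ y.2 _ j'.2⟩, h.symm⟩
        have e2 := huniq ↑↑z' ⟨⟨hC'C (z' : ↥C').2, hC'τ _ (z' : ↥C').2 _ j'.2⟩,
          (hr j' ↑z' z'.2).2⟩
        exact Subtype.ext (e1.symm ▸ e2 ▸ rfl)
      · rintro ⟨-, h | h⟩
        · have : (y : V) = ↑↑z' := congrArg (Subtype.val : ↥C' → V) h
          rw [this]
          exact (hr j' ↑z' z'.2).2.symm
        · exact h.elim
    · -- inr inl
      constructor
      · intro h
        refine ⟨Sum.inr_ne_inl, Or.inr ?_⟩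
        obtain ⟨w, -, huniq⟩ := mintr_extremal hG hC hx₀ j.2.1 (hr j ↑z z.2).1
        have e1 := huniq ↑y' ⟨⟨hC'C y'.2, hC'τ _ y'.2 _ j.2⟩, h⟩
        have e2 := huniq ↑↑z ⟨⟨hC'C (z : ↥C').2, hC'τ _ (z : ↥C').2 _ j.2⟩,
          (hr j ↑z z.2).2⟩
        exact Subtype.ext (e1.symm ▸ e2 ▸ rfl)
      · rintro ⟨-, h | h⟩
        · exact h.elim
        · have : (y' : V) = ↑↑z := congrArg (Subtype.val : ↥C' → V) h
          rw [this]
          exact (hr j ↑z z.2).2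
    · -- inr inr
      have hvj := (hr j ↑z z.2).1
      have hvj' := (hr j' ↑z' z'.2).1
      have hadjz := (hr j ↑z z.2).2
      have hadjz' := (hr j' ↑z' z'.2).2
      constructor
      · intro h
        have hjj : j = j' := by
          by_contra hne
          have hτne : (j : Set V) ≠ ↑j' := fun he => hne (Subtype.ext he)
          exact (mintr_noadj hG j.2.1 j'.2.1 (fam_disjoint hΦ j.2 j'.2 hτne) hvj hvj') h
        subst hjj
        have hdist : G.dist ↑↑z ↑↑z' = G.dist (r j ↑z) (r j ↑z') :=
          cross_pair_dist hG hC hx₀ j.2.1 hvj hvj' (hC'C (z : ↥C').2)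
            (hC'τ _ (z : ↥C').2 _ j.2) (hC'C (z' : ↥C').2) (hC'τ _ (z' : ↥C').2 _ j.2)
            hadjz hadjz'
        have hadjzz : G.Adj ↑↑z ↑↑z' := by
          rw [← dist1, hdist, dist1]
          exact h
        refine ⟨?_, Or.inl ⟨rfl, hadjzz⟩⟩
        intro he
        have : z = z' := by
          have h1 := Sum.inr.inj he
          rw [Sigma.mk.inj_iff] at h1
          exact eq_of_heq h1.2
        rw [this] at hadjzz
        exact hadjzz.ne rfl
      · rintro ⟨-, ⟨hjj, h⟩ | ⟨hjj, h⟩⟩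
        · subst hjj
          have hdist : G.dist ↑↑z ↑↑z' = G.dist (r j ↑z) (r j ↑z') :=
            cross_pair_dist hG hC hx₀ j.2.1 hvj hvj' (hC'C (z : ↥C').2)
              (hC'τ _ (z : ↥C').2 _ j.2) (hC'C (z' : ↥C').2) (hC'τ _ (z' : ↥C').2 _ j.2)
              hadjz hadjz'
          rw [← dist1, ← hdist, dist1]
          exact h
        · have hjj2 : j = j' := hjj.symm
          subst hjj2
          have hdist : G.dist ↑↑z ↑↑z' = G.dist (r j ↑z) (r j ↑z') :=
            cross_pair_dist hG hC hx₀ j.2.1 hvj hvj' (hC'C (z : ↥C').2)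
              (hC'τ _ (z : ↥C').2 _ j.2) (hC'C (z' : ↥C').2) (hC'τ _ (z' : ↥C').2 _ j.2)
              hadjz hadjz'
          rw [← dist1, ← hdist, dist1]
          exact h.symm
  -- the link conditions
  have hLv : ∀ j : J, GConvex G {w | w ∈ C' ∧ ∃ v ∈ (j : Set V), G.Adj v w} := by
    intro j
    intro x hx y hy w hw
    have hN := crossN_convex hG hC hx₀ j.2.1
    have hxN : x ∈ {w | (w ∈ C ∧ w ∉ (j : Set V)) ∧ ∃ v ∈ (j : Set V), G.Adj v w} :=
      ⟨⟨hC'C hx.1, hC'τ _ hx.1 _ j.2⟩, hx.2⟩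
    have hyN : y ∈ {w | (w ∈ C ∧ w ∉ (j : Set V)) ∧ ∃ v ∈ (j : Set V), G.Adj v w} :=
      ⟨⟨hC'C hy.1, hC'τ _ hy.1 _ j.2⟩, hy.2⟩
    exact ⟨hC'conv x hx.1 y hy.1 hw, (hN x hxN y hyN hw).2⟩
  have hLne : ∀ j : J, ∃ w : V, w ∈ C' ∧ ∃ v ∈ (j : Set V), G.Adj v w := by
    intro j
    obtain ⟨⟨H, hHcut, hHeq⟩, -⟩ := j.2.1
    obtain ⟨v, hvτ⟩ : (↑j : Set V).Nonempty := hHeq ▸ hHcut.2.2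
    have hvU : v ∈ ⋃₀ (Fam G x₀ Φ C c) := ⟨↑j, j.2, hvτ⟩
    obtain ⟨hτ, hvτ', ⟨hbC, hbτ⟩, hadj⟩ := hfc v hvU
    have he : (fc v).1 = ↑j := hτuniq hτ j.2 hvτ' hvτ
    exact ⟨(fc v).2, hbC' v hvU, v, hvτ, hadj⟩
  have hL : ∀ j, (L j).Nonempty ∧ ((G.induce C').induce (L j)).Connected ∧
      GConvex (G.induce C') (L j) := by
    intro j
    obtain ⟨w, hwC', hwL⟩ := hLne j
    refine ⟨⟨⟨w, hwC'⟩, hwL⟩, ?_, ?_⟩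
    · -- connectivity via iso with G.induce Lv
      have hconn : (G.induce {w | w ∈ C' ∧ ∃ v ∈ (j : Set V), G.Adj v w}).Connected :=
        induced_connected hG (hLv j) ⟨w, hwC', hwL⟩
      refine conn_iso ?_ hconn
      exact {
        toFun := fun p => ⟨⟨↑p, p.2.1⟩, p.2.2⟩
        invFun := fun p => ⟨((p : ↥C') : V), ⟨(p : ↥C').2, p.2⟩⟩
        left_inv := fun p => rfl
        right_inv := fun p => rfl
        map_rel_iff' := Iff.rfl }
    · -- convexity in the induced graph
      intro x hx y hy z hz
      simp only [mem_gInt] at hz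
      rw [induced_dist' hG hC'conv, induced_dist' hG hC'conv, induced_dist' hG hC'conv] at hz
      have : (z : V) ∈ {w | w ∈ C' ∧ ∃ v ∈ (j : Set V), G.Adj v w} :=
        hLv j ↑x ⟨(x : ↥C').2, hx⟩ ↑y ⟨(y : ↥C').2, hy⟩ hz
      exact this.2
  exact ⟨m + 1, RegCollapsible.glue hm L hL (G.induce C)
    (SimpleGraph.Iso.symm ⟨Equiv.ofBijective GI ⟨hGIinj, hGIsurj⟩, hadjiff _ _⟩)⟩

/-! chains of traces, iteration, and the main induction -/

def TChain (G : SimpleGraph V) (x₀ : V) (C : Set V) (k : ℕ) : Prop :=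
  ∃ s : Fin k → Set V, (∀ i, IsCut G x₀ C (s i)) ∧ StrictMono (fun i => s i ∩ C)

lemma cut_nested (hΦ : ∀ H K, IsHalfspace G H → IsHalfspace G K → Crossing H K → Φ H ≠ Φ K)
    {H K : Set V} (hH : IsCut G x₀ C H) (hK : IsCut G x₀ C K) (hcc : Φ H = Φ K)
    (hsub : H ∩ C ⊆ K ∩ C) (hne : H ∩ C ≠ K ∩ C) : H ⊆ K ∧ H ≠ K := by
  have hnc : ¬ Crossing H K := fun hx => hΦ H K hH.1 hK.1 hx hcc
  obtain ⟨y, hy⟩ := hH.2.2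
  have h1 : (H ∩ K).Nonempty := ⟨y, hy.1, (hsub hy).1⟩
  have h4 : (Hᶜ ∩ Kᶜ).Nonempty := ⟨x₀, hH.2.1, hK.2.1⟩
  have hor : ¬ (H ∩ Kᶜ).Nonempty ∨ ¬ (Hᶜ ∩ K).Nonempty := by
    by_contra hcon
    push_neg at hcon
    exact hnc ⟨h1, hcon.1, hcon.2, h4⟩
  rcases hor with h | h
  · have hHK : H ⊆ K := fun z hz => by
      by_contra hzK
      exact h ⟨z, hz, hzK⟩
    exact ⟨hHK, fun he => hne (he ▸ rfl)⟩
  · exfalso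
    have hKH : K ⊆ H := fun z hz => by
      by_contra hzH
      exact h ⟨z, hzH, hz⟩
    exact hne (Set.Subset.antisymm hsub (Set.inter_subset_inter_left _ hKH))

lemma tchain_bound (hG : IsMedianGraph G) {w n : ℕ}
    (hw : ∀ (k : ℕ) (s : Fin k → Set V), StrictMono s → (∀ i, IsHalfspace G (s i)) → k ≤ w)
    (hΦb : ∀ H, IsHalfspace G H → Φ H < n)
    (hΦ : ∀ H K, IsHalfspace G H → IsHalfspace G K → Crossing H K → Φ H ≠ Φ K)
    (C : Set V) : ¬ TChain G x₀ C (n * w + 1) := by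
  rintro ⟨s, hcut, hmono⟩
  set χ : Fin (n * w + 1) → Fin n := fun i => ⟨Φ (s i), hΦb _ (hcut i).1⟩ with hχ
  have hcard : Fintype.card (Fin n) * w < Fintype.card (Fin (n * w + 1)) := by
    simp only [Fintype.card_fin]
    omega
  obtain ⟨c, hc⟩ := Fintype.exists_lt_card_fiber_of_mul_lt_card χ hcard
  obtain ⟨t, hts, htc⟩ := Finset.exists_subset_card_eq (Nat.succ_le_of_lt hc)
  set e := t.orderEmbOfFin htc with he
  have hmem : ∀ i : Fin (w + 1), e i ∈ t := fun i => Finset.orderEmbOfFin_mem t htc i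
  have hcol : ∀ i, χ (e i) = c := fun i => by
    have := hts (hmem i)
    simp only [Finset.mem_filter] at this
    exact this.2
  have hKmono : StrictMono (fun i : Fin (w + 1) => s (e i)) := by
    intro i j hij
    have h1 : e i < e j := e.strictMono hij
    have h2 := hmono h1
    have hcc : Φ (s (e i)) = Φ (s (e j)) := by
      have e1 := hcol i
      have e2 := hcol j
      rw [hχ] at e1 e2
      have := congrArg Fin.val (e1.trans e2.symm)
      exact this
    obtain ⟨hsub, hne⟩ := cut_nested hΦ (hcut _) (hcut _) hcc h2.le h2.ne
    exact hsub.ssubset_of_ne hne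
  have := hw (w + 1) _ hKmono (fun i => (hcut _).1)
  omega

def iterPeel (G : SimpleGraph V) (x₀ : V) (Φ : Set V → ℕ) (C : Set V) : ℕ → Set V
  | 0 => C
  | k + 1 => peel G x₀ Φ (iterPeel G x₀ Φ C k) k

lemma iterPeel_subset : ∀ k, iterPeel G x₀ Φ C k ⊆ C := by
  intro k
  induction k with
  | zero => exact subset_rfl
  | succ k ih => exact (peel_subset).trans ih

lemma iterPeel_mono {k l : ℕ} (h : k ≤ l) : iterPeel G x₀ Φ C l ⊆ iterPeel G x₀ Φ C k := by
  induction l with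
  | zero => rw [Nat.le_zero.1 h]
  | succ l ih =>
    rcases Nat.lt_or_ge k (l + 1) with h' | h'
    · exact (peel_subset : iterPeel G x₀ Φ C (l+1) ⊆ _).trans (ih (by omega))
    · have : k = l + 1 := by omega
      rw [this]

lemma iterPeel_convex (hC : GConvex G C) : ∀ k, GConvex G (iterPeel G x₀ Φ C k) := by
  intro k
  induction k with
  | zero => exact hC
  | succ k ih => exact peel_convex ih

lemma iterPeel_x₀ (hx₀ : x₀ ∈ C) : ∀ k, x₀ ∈ iterPeel G x₀ Φ C k := by
  intro k
  induction k with
  | zero => exact hx₀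
  | succ k ih => exact x₀_mem_peel ih

lemma iter_stable (hG : IsMedianGraph G) (hC : GConvex G C) (hx₀ : x₀ ∈ C)
    (hΦ : ∀ H K, IsHalfspace G H → IsHalfspace G K → Crossing H K → Φ H ≠ Φ K)
    {K H : Set V} (hKh : IsHalfspace G K) (hKx : x₀ ∉ K)
    (hHh : IsHalfspace G H) (hHx : x₀ ∉ H) :
    ∀ k, (K ∩ iterPeel G x₀ Φ C k).Nonempty →
      K ∩ iterPeel G x₀ Φ C k ⊆ H ∩ iterPeel G x₀ Φ C k → K ∩ C ⊆ H ∩ C := by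
  intro k
  induction k with
  | zero => exact fun _ h => h
  | succ k ih =>
    intro hne hsub
    have h1 : K ∩ iterPeel G x₀ Φ C k ⊆ H ∩ iterPeel G x₀ Φ C k :=
      stability hG (iterPeel_convex hC k) (iterPeel_x₀ hx₀ k) hΦ hKh hKx hHh hHx hne hsub
    have h2 : (K ∩ iterPeel G x₀ Φ C k).Nonempty :=
      hne.mono (Set.inter_subset_inter_right _ (peel_subset))
    exact ih h2 h1

lemma witness_death (hG : IsMedianGraph G) (hC : GConvex G C) (hx₀ : x₀ ∈ C)
    (hΦ : ∀ H K, IsHalfspace G H → IsHalfspace G K → Crossing H K → Φ H ≠ Φ K)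
    {K : Set V} (hKcut : IsCut G x₀ C K) (hmin : IsMinTr G x₀ C (K ∩ C)) :
    K ∩ iterPeel G x₀ Φ C (Φ K + 1) = ∅ := by
  set c := Φ K with hc
  set D := iterPeel G x₀ Φ C c with hD
  rcases Set.eq_empty_or_nonempty (K ∩ D) with hKD | hKD
  · apply Set.eq_empty_of_subset_empty
    rw [← hKD]
    exact Set.inter_subset_inter_right _ (peel_subset)
  · have hKcutD : IsCut G x₀ D K := ⟨hKcut.1, hKcut.2.1, hKD⟩
    have hminD : IsMinTr G x₀ D (K ∩ D) := by
      refine ⟨⟨K, hKcutD, rfl⟩, ?_⟩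
      intro N hNcut hNsub
      have hNC : N ∩ C ⊆ K ∩ C :=
        iter_stable hG hC hx₀ hΦ hNcut.1 hNcut.2.1 hKcut.1 hKcut.2.1 c hNcut.2.2 hNsub
      have hNCeq : N ∩ C = K ∩ C := hmin.2 N
        ⟨hNcut.1, hNcut.2.1, hNcut.2.2.mono (Set.inter_subset_inter_right _ (iterPeel_subset c))⟩
        hNC
      have : N ∩ D = (N ∩ C) ∩ D := by
        rw [Set.inter_assoc]
        congr 1
        exact (Set.inter_eq_self_of_subset_right (iterPeel_subset c)).symm
      rw [this, hNCeq, Set.inter_assoc,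
        Set.inter_eq_self_of_subset_right (iterPeel_subset c)]
    have hfam : (K ∩ D) ∈ Fam G x₀ Φ D c := ⟨hminD, K, hKcutD, rfl, hc.symm⟩
    exact peel_kill hfam rfl

lemma chain_drop (hG : IsMedianGraph G) (hC : GConvex G C) (hx₀ : x₀ ∈ C) {n : ℕ}
    (hΦb : ∀ H, IsHalfspace G H → Φ H < n)
    (hΦ : ∀ H K, IsHalfspace G H → IsHalfspace G K → Crossing H K → Φ H ≠ Φ K)
    {k : ℕ} (hk : ¬ TChain G x₀ C (k + 2)) :
    ¬ TChain G x₀ (iterPeel G x₀ Φ C n) (k + 1) := by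
  rintro ⟨s, hcut, hmono⟩
  set Cn := iterPeel G x₀ Φ C n with hCn
  -- lift the chain to C
  have hcutC : ∀ i, IsCut G x₀ C (s i) := fun i =>
    ⟨(hcut i).1, (hcut i).2.1,
      (hcut i).2.2.mono (Set.inter_subset_inter_right _ (iterPeel_subset n))⟩
  have hmonoC : StrictMono (fun i => s i ∩ C) := by
    intro i j hij
    have h2 := hmono hij
    have hsub : s i ∩ C ⊆ s j ∩ C :=
      iter_stable hG hC hx₀ hΦ (hcut i).1 (hcut i).2.1 (hcut j).1 (hcut j).2.1 n
        (hcut i).2.2 h2.le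
    refine hsub.ssubset_of_ne ?_
    intro he
    have : s i ∩ Cn = s j ∩ Cn := by
      rw [hCn, show s i ∩ iterPeel G x₀ Φ C n = (s i ∩ C) ∩ iterPeel G x₀ Φ C n by
          rw [Set.inter_assoc, Set.inter_eq_self_of_subset_right (iterPeel_subset n)],
        he, Set.inter_assoc, Set.inter_eq_self_of_subset_right (iterPeel_subset n)]
    exact h2.ne this
  -- the bottom of the chain
  · set i0 : Fin (k + 1) := ⟨0, Nat.succ_pos k⟩ with hi0
    have hmin : IsMinTr G x₀ C (s i0 ∩ C) := by
      refine ⟨⟨s i0, hcutC i0, rfl⟩, ?_⟩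
      intro N hNcut hNsub
      by_contra hne
      -- prepend N to the chain
      apply hk
      refine ⟨Fin.cons N (fun i => s i), ?_, ?_⟩
      · intro i
        refine Fin.cases ?_ ?_ i
        · simpa using hNcut
        · intro i'
          simpa using hcutC i'
      · intro a b hab
        rcases Fin.eq_zero_or_eq_succ a with rfl | ⟨a', rfl⟩ <;>
          rcases Fin.eq_zero_or_eq_succ b with rfl | ⟨b', rfl⟩
        · exact absurd hab (lt_irrefl _)
        · simp only [Fin.cons_zero, Fin.cons_succ]
          have h1 : N ∩ C ⊂ s i0 ∩ C := hNsub.ssubset_of_ne hne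
          have h2 : s i0 ∩ C ⊆ s b' ∩ C := by
            rcases Nat.eq_zero_or_pos (b' : ℕ) with hb | hb
            · have : b' = i0 := by
                rw [hi0]; exact Fin.ext hb
              rw [this]
            · exact (hmonoC (show i0 < b' by rw [hi0]; exact Fin.mk_lt_of_lt_val hb)).le
          exact h1.trans_le h2
        · exact absurd hab (by simp [Fin.lt_def])
        · simp only [Fin.cons_succ]
          exact hmonoC (by rwa [Fin.succ_lt_succ_iff] at hab)
    -- the bottom dies by step Φ (s i0) + 1 ≤ n
    have hdeath := witness_death hG hC hx₀ hΦ (hcutC i0) hmin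
    have hsub : s i0 ∩ Cn ⊆ s i0 ∩ iterPeel G x₀ Φ C (Φ (s i0) + 1) :=
      Set.inter_subset_inter_right _ (iterPeel_mono (hΦb _ (hcutC i0).1))
    obtain ⟨y, hy⟩ := (hcut i0).2.2
    exact Set.eq_empty_iff_forall_notMem.1 hdeath y (hsub hy)

lemma RegCollapsible_iso {W : Type} {G1 : SimpleGraph W} {m : ℕ} (h : RegCollapsible G1 m) :
    ∀ {W' : Type} (G2 : SimpleGraph W'), G2 ≃g G1 → RegCollapsible G2 m := by
  induction h with
  | point G v hv =>
    intro W' G2 e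
    refine RegCollapsible.point G2 (e.symm v) (fun w => ?_)
    have h1 : e w = v := hv (e w)
    have h2 := congrArg e.symm h1
    simpa using h2
  | glue hrec L hL G' e ih =>
    intro W' G2 e2
    exact RegCollapsible.glue hrec L hL G2 (e2.trans e)

lemma main_ind (hG : IsMedianGraph G) {n : ℕ}
    (hΦb : ∀ H, IsHalfspace G H → Φ H < n)
    (hΦ : ∀ H K, IsHalfspace G H → IsHalfspace G K → Crossing H K → Φ H ≠ Φ K) :
    ∀ D : ℕ, ∀ C : Set V, GConvex G C → x₀ ∈ C → ¬ TChain G x₀ C (D + 1) →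
    ∃ m, RegCollapsible (G.induce C) m := by
  intro D
  induction D with
  | zero =>
    intro C hC hx₀ hch
    refine ⟨0, RegCollapsible.point _ ⟨x₀, hx₀⟩ ?_⟩
    rintro ⟨v, hv⟩
    by_contra hne
    have hvx : v ≠ x₀ := fun h => hne (Subtype.ext h)
    obtain ⟨H, hHcut, hvH⟩ := cut_of_ne hG hv hvx
    refine hch ⟨fun _ => H, fun _ => hHcut, ?_⟩
    intro a b hab
    have ha := a.isLt; have hb := b.isLt
    have hab' : a = b := Fin.ext (by omega)
    exact absurd hab (by rw [hab']; exact lt_irrefl _)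
  | succ D ih =>
    intro C hC hx₀ hch
    have hbase : ∃ m, RegCollapsible (G.induce (iterPeel G x₀ Φ C n)) m := by
      apply ih _ (iterPeel_convex hC n) (iterPeel_x₀ hx₀ n)
      exact chain_drop hG hC hx₀ hΦb hΦ hch
    have hdesc : ∀ k : ℕ, ∃ m, RegCollapsible (G.induce (iterPeel G x₀ Φ C (n - k))) m := by
      intro k
      induction k with
      | zero => simpa using hbase
      | succ k ihk =>
        rcases Nat.lt_or_ge k n with hlt | hge
        · have heq : n - k = (n - (k + 1)) + 1 := by omega
          rw [heq] at ihk
          obtain ⟨m, hm⟩ := ihk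
          exact glue_step hG (iterPeel_convex hC _) (iterPeel_x₀ hx₀ _) hΦ (n - (k + 1)) hm
        · have heq : n - (k + 1) = n - k := by omega
          rw [heq]
          exact ihk
    have hfin := hdesc n
    rw [Nat.sub_self] at hfin
    exact hfin

end MC

/-- Every CAT(0) cube complex (encoded by its median underlying graph) with finite
width and finitely colorable hyperplanes is regularly collapsible. -/
theorem cat0_finiteWidth_colorable_regCollapsible {V : Type} (G : SimpleGraph V)
    (hG : IsMedianGraph G)
    (w : ℕ)
    (hw : ∀ (n : ℕ) (s : Fin n → Set V), StrictMono s →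
      (∀ k, IsHalfspace G (s k)) → n ≤ w)
    (n : ℕ)
    (hcol : ∃ Φ : Set V → ℕ,
      (∀ H, IsHalfspace G H → Φ H < n ∧ Φ Hᶜ = Φ H) ∧
      ∀ H K, IsHalfspace G H → IsHalfspace G K → Crossing H K → Φ H ≠ Φ K) :
    ∃ m : ℕ, RegCollapsible G m := by
  classical
  obtain ⟨Φ, hΦb', hΦ⟩ := hcol
  obtain ⟨x₀⟩ : Nonempty V := hG.1.nonempty
  have hch : ¬ MC.TChain G x₀ Set.univ (n * w + 1) :=
    MC.tchain_bound hG hw (fun H hH => (hΦb' H hH).1) hΦ Set.univ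
  obtain ⟨m, hm⟩ := MC.main_ind hG (fun H hH => (hΦb' H hH).1) hΦ (n * w) Set.univ
    MC.convex_univ (Set.mem_univ _) hch
  exact ⟨m, MC.RegCollapsible_iso hm G (G.induceUnivIso).symm⟩
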